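/- (Brady–Watt formula) Let A be an m×n real matrix with no zero rows and rows A_1^T,…,A_m^T. Suppose W is the lower-triangular m×m matrix satisfying W + W^T = 2AA^T and W is invertible. Then the product of reflections R_A = R_m ⋯ R_1, where R_i = I_n - 2 A_i A_i^T/‖A_i‖², equals I_n - 2 A^T W^{-1} A. -/

import Mathlib

open Matrix

/-- The Householder reflection determined by a (nonzero) vector `a`. -/
noncomputable def reflOf {n : ℕ} (a : Fin n → ℝ) : Matrix (Fin n) (Fin n) ℝ :=
  1 - (2 / (∑ j, a j ^ 2)) • Matrix.vecMulVec a a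

/-- The product `R_m ⋯ R_2 R_1` of the Householder reflections of the rows of `A`. -/
noncomputable def reflProd {m n : ℕ} (A : Matrix (Fin m) (Fin n) ℝ) :
    Matrix (Fin n) (Fin n) ℝ :=
  (((List.finRange m).map (fun i => reflOf (A i))).reverse).prod

lemma reflProd_succ {m n : ℕ} (A : Matrix (Fin (m + 1)) (Fin n) ℝ) :
    reflProd A = reflProd (Matrix.of fun i j => A i.succ j) * reflOf (A 0) := by
  unfold reflProd
  rw [List.finRange_succ]
  simp [List.map_map, Function.comp]
  rfl

lemma mul_vecMulVec' {n : ℕ} (S : Matrix (Fin n) (Fin n) ℝ) (v w : Fin n → ℝ) :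
    S * Matrix.vecMulVec v w = Matrix.vecMulVec (S *ᵥ v) w := by
  ext i j
  simp [Matrix.mul_apply, Matrix.vecMulVec_apply, Matrix.mulVec, dotProduct,
    Finset.sum_mul, mul_assoc]

/-- Brady–Watt formula: if `W` is lower triangular, invertible, and
`W + Wᵀ = 2AAᵀ`, then `R_A = I - 2 Aᵀ W⁻¹ A`. -/
theorem brady_watt (m n : ℕ) (A : Matrix (Fin m) (Fin n) ℝ) (hA : ∀ i, A i ≠ 0)
    (W : Matrix (Fin m) (Fin m) ℝ)
    (hlow : ∀ i j : Fin m, i < j → W i j = 0)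
    (hW : W + Wᵀ = (2 : ℝ) • (A * Aᵀ))
    (hWinv : IsUnit W.det) :
    reflProd A = 1 - (2 : ℝ) • (Aᵀ * W⁻¹ * A) := by
  induction m with
  | zero =>
    have h0 : Aᵀ * W⁻¹ * A = 0 := by
      ext p q
      simp [Matrix.mul_apply]
    simp [reflProd, h0, List.finRange]
  | succ m ih =>
    -- diagonal entries
    have hdet : W.det = ∏ i, W i i :=
      Matrix.det_of_lowerTriangular W (fun i j h => hlow i j (by simpa using h))
    have hdiag : ∀ i, W i i ≠ 0 := by
      intro i
      have h := hWinv
      rw [hdet, isUnit_iff_ne_zero, Finset.prod_ne_zero_iff] at h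
      exact h i (Finset.mem_univ i)
    have hα : W 0 0 = ∑ j, A 0 j ^ 2 := by
      have h := congrFun (congrFun hW 0) 0
      simp only [Matrix.add_apply, Matrix.transpose_apply, Matrix.smul_apply, Matrix.mul_apply,
        smul_eq_mul] at h
      have h2 : ∑ j, A 0 j ^ 2 = ∑ j, A 0 j * A 0 j := by simp [sq]
      rw [h2]; linarith
    have hα0 : W 0 0 ≠ 0 := hdiag 0
    set A' : Matrix (Fin m) (Fin n) ℝ := Matrix.of fun i j => A i.succ j with hA'def
    set W' : Matrix (Fin m) (Fin m) ℝ := W.submatrix Fin.succ Fin.succ with hW'def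
    have hA' : ∀ i, A' i ≠ 0 := fun i => hA i.succ
    have hlow' : ∀ i j : Fin m, i < j → W' i j = 0 := fun i j h =>
      hlow _ _ (Fin.succ_lt_succ_iff.mpr h)
    have hWW' : W' + W'ᵀ = (2 : ℝ) • (A' * A'ᵀ) := by
      ext i j
      have h := congrFun (congrFun hW i.succ) j.succ
      simpa [Matrix.mul_apply, hW'def, hA'def] using h
    have hdet' : IsUnit W'.det := by
      rw [isUnit_iff_ne_zero,
        Matrix.det_of_lowerTriangular W' (fun i j h => hlow' i j (by simpa using h))]
      exact Finset.prod_ne_zero_iff.mpr fun i _ => hdiag i.succ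
    set V : Matrix (Fin m) (Fin m) ℝ := W'⁻¹ with hVdef
    have hVW' : W' * V = 1 := Matrix.mul_nonsing_inv _ hdet'
    -- the subdiagonal column
    have hc : ∀ i : Fin m, W i.succ 0 = 2 * ∑ k, A i.succ k * A 0 k := by
      intro i
      have h := congrFun (congrFun hW i.succ) 0
      have h0 : W 0 i.succ = 0 := hlow 0 i.succ (Fin.succ_pos i)
      simp only [Matrix.add_apply, Matrix.transpose_apply, Matrix.smul_apply, Matrix.mul_apply,
        smul_eq_mul, h0, add_zero] at h
      exact h
    have hcv : (fun i => W i.succ 0) = (2 : ℝ) • (A' *ᵥ A 0) := by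
      funext i
      simp [Matrix.mulVec, dotProduct, hc i, hA'def]
    set d : Fin m → ℝ := (-(W 0 0)⁻¹) • (V *ᵥ fun i => W i.succ 0) with hd
    set B : Matrix (Fin (m + 1)) (Fin (m + 1)) ℝ := Matrix.of (fun i =>
      Fin.cases (Fin.cons (W 0 0)⁻¹ 0) (fun i' => Fin.cons (d i') (V i')) i) with hBdef
    have hB00 : B 0 0 = (W 0 0)⁻¹ := by simp [hBdef]
    have hB0s : ∀ j : Fin m, B 0 j.succ = 0 := by intro j; simp [hBdef]
    have hBs0 : ∀ i : Fin m, B i.succ 0 = d i := by intro i; simp [hBdef]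
    have hBss : ∀ i j : Fin m, B i.succ j.succ = V i j := by intro i j; simp [hBdef]
    have hWVc : W' *ᵥ (V *ᵥ fun i => W i.succ 0) = fun i => W i.succ 0 := by
      rw [Matrix.mulVec_mulVec, hVW', Matrix.one_mulVec]
    have hWd : W' *ᵥ d = (-(W 0 0)⁻¹) • fun i => W i.succ 0 := by
      rw [hd, Matrix.mulVec_smul, hWVc]
    have hWB : W * B = 1 := by
      ext i j
      rw [Matrix.mul_apply, Fin.sum_univ_succ]
      refine Fin.cases ?_ (fun i' => ?_) i
      · have hz : ∀ k : Fin m, W 0 k.succ = 0 := fun k => hlow 0 k.succ (Fin.succ_pos k)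
        simp only [hz, zero_mul, Finset.sum_const_zero, add_zero]
        refine Fin.cases ?_ (fun j' => ?_) j
        · rw [hB00, mul_inv_cancel₀ hα0, Matrix.one_apply_eq]
        · rw [hB0s, mul_zero, Matrix.one_apply_ne (Fin.succ_ne_zero j').symm]
      · refine Fin.cases ?_ (fun j' => ?_) j
        · have hs : ∑ k : Fin m, W i'.succ k.succ * B k.succ 0 = (W' *ᵥ d) i' := by
            simp [Matrix.mulVec, dotProduct, hBs0, hW'def]
          rw [hs, hWd, hB00, Matrix.one_apply_ne (Fin.succ_ne_zero i')]
          simp [mul_comm]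
        · have hs : ∑ k : Fin m, W i'.succ k.succ * B k.succ j'.succ = (W' * V) i' j' := by
            simp [Matrix.mul_apply, hBss, hW'def]
          rw [hs, hVW', hB0s, mul_zero, zero_add]
          simp [Matrix.one_apply, Fin.succ_inj]
    have hWinv_eq : W⁻¹ = B := Matrix.inv_eq_right_inv hWB
    rw [reflProd_succ, ih A' hA' W' hlow' hWW' hdet', hWinv_eq, ← hVdef]
    set S : Matrix (Fin n) (Fin n) ℝ := A'ᵀ * V * A' with hS
    have hABA : Aᵀ * B * A =
        (W 0 0)⁻¹ • Matrix.vecMulVec (A 0) (A 0)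
          + Matrix.vecMulVec (A'ᵀ *ᵥ d) (A 0) + S := by
      ext p q
      simp only [Matrix.mul_apply, Matrix.add_apply, Matrix.smul_apply, Matrix.vecMulVec_apply,
        Matrix.transpose_apply, smul_eq_mul, Matrix.mulVec, dotProduct,
        Fin.sum_univ_succ, hB00, hB0s, hBs0, hBss, hA'def, hS, Matrix.of_apply,
        Pi.zero_apply, mul_zero, zero_add, zero_mul]
      ring
    have hu : A'ᵀ *ᵥ d = (-(2 * (W 0 0)⁻¹)) • (S *ᵥ A 0) := by
      rw [hd, hcv, hS, Matrix.mul_assoc]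
      simp only [Matrix.mulVec_smul, Matrix.mulVec_mulVec, smul_smul]
      congr 1
      ring
    have hvm : Matrix.vecMulVec ((-(2 * (W 0 0)⁻¹)) • (S *ᵥ A 0)) (A 0)
        = (-(2 * (W 0 0)⁻¹)) • Matrix.vecMulVec (S *ᵥ A 0) (A 0) := by
      ext p q
      simp [Matrix.vecMulVec_apply]
      ring
    have hSv : S * Matrix.vecMulVec (A 0) (A 0) = Matrix.vecMulVec (S *ᵥ A 0) (A 0) :=
      mul_vecMulVec' S (A 0) (A 0)
    rw [hABA, hu, hvm]
    unfold reflOf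
    rw [← hα]
    rw [mul_sub, mul_one, sub_mul, one_mul, Matrix.smul_mul, Matrix.mul_smul, hSv,
      div_eq_mul_inv]
    module
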